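/- Let μ and ν be probability measures on ℝ that are both symmetric about the same point a, i.e. the pushforward of μ under the map x ↦ 2a − x equals μ, and likewise for ν. Then the relative effect equals 1/2: (μ ⊗ ν){(x,y) : x < y} + (1/2)·(μ ⊗ ν){(x,y) : x = y} = 1/2. -/

import Mathlib

open MeasureTheory

/-- If `μ` and `ν` are both symmetric about the same point `a`, then the relative
effect of `ν` with respect to `μ` equals `1/2`. -/
theorem relative_effect_symmetric (μ ν : Measure ℝ)
    [IsProbabilityMeasure μ] [IsProbabilityMeasure ν] (a : ℝ)
    (hμ : Measure.map (fun x : ℝ => 2 * a - x) μ = μ)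
    (hν : Measure.map (fun x : ℝ => 2 * a - x) ν = ν) :
    (μ.prod ν) {p : ℝ × ℝ | p.1 < p.2} + (1/2) * (μ.prod ν) {p : ℝ × ℝ | p.1 = p.2}
      = 1/2 := by
  set f : ℝ → ℝ := fun x => 2 * a - x with hf
  have hfm : Measurable f := by fun_prop
  have hmap : (μ.prod ν).map (Prod.map f f) = μ.prod ν := by
    rw [← Measure.map_prod_map _ _ hfm hfm, hμ, hν]
  set L := (μ.prod ν) {p : ℝ × ℝ | p.1 < p.2} with hL
  set G := (μ.prod ν) {p : ℝ × ℝ | p.2 < p.1} with hG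
  set E := (μ.prod ν) {p : ℝ × ℝ | p.1 = p.2} with hE
  have hLmeas : MeasurableSet {p : ℝ × ℝ | p.1 < p.2} := measurableSet_lt measurable_fst measurable_snd
  have hGmeas : MeasurableSet {p : ℝ × ℝ | p.2 < p.1} := measurableSet_lt measurable_snd measurable_fst
  have hEmeas : MeasurableSet {p : ℝ × ℝ | p.1 = p.2} := measurableSet_eq_fun measurable_fst measurable_snd
  have hLG : L = G := by
    have : (μ.prod ν).map (Prod.map f f) {p : ℝ × ℝ | p.1 < p.2} = G := by
      rw [Measure.map_apply (hfm.prodMap hfm) hLmeas]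
      congr 1
      ext p
      simp only [Set.mem_preimage, Prod.map, Set.mem_setOf_eq, hf]
      constructor <;> intro h <;> linarith
    rw [hL, ← hmap, this]
  have hsum : L + G + E = 1 := by
    have hdisj1 : Disjoint {p : ℝ × ℝ | p.1 < p.2} {p : ℝ × ℝ | p.2 < p.1} := by
      rw [Set.disjoint_left]; intro p hp hp'; exact absurd hp' (lt_asymm (show p.1 < p.2 from hp))
    have hdisj2 : Disjoint ({p : ℝ × ℝ | p.1 < p.2} ∪ {p : ℝ × ℝ | p.2 < p.1}) {p : ℝ × ℝ | p.1 = p.2} := by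
      rw [Set.disjoint_left]; rintro p (hp | hp) hp' <;> simp_all [Set.mem_setOf_eq]
    have hunion : ({p : ℝ × ℝ | p.1 < p.2} ∪ {p : ℝ × ℝ | p.2 < p.1}) ∪ {p : ℝ × ℝ | p.1 = p.2} = Set.univ := by
      ext p
      simp only [Set.mem_union, Set.mem_setOf_eq, Set.mem_univ, iff_true]
      rcases lt_trichotomy p.1 p.2 with h | h | h <;> tauto
    have h1 := measure_union (μ := μ.prod ν) hdisj1 hGmeas
    have h2 := measure_union (μ := μ.prod ν) hdisj2 hEmeas
    rw [hunion] at h2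
    rw [hL, hG, hE, ← h1, ← h2, measure_univ]
  rw [← hLG] at hsum
  have hLfin : L ≠ ⊤ := (measure_lt_top _ _).ne
  have hEfin : E ≠ ⊤ := (measure_lt_top _ _).ne
  have hhalf : (1/2 : ENNReal) * E ≠ ⊤ := ENNReal.mul_ne_top (by norm_num) hEfin
  rw [← ENNReal.toReal_eq_toReal_iff' (ENNReal.add_ne_top.2 ⟨hLfin, hhalf⟩) (by norm_num)]
  have hs := congrArg ENNReal.toReal hsum
  rw [ENNReal.toReal_add (by finiteness) hEfin, ENNReal.toReal_add hLfin hLfin,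
    ENNReal.toReal_one] at hs
  rw [ENNReal.toReal_add hLfin hhalf, ENNReal.toReal_mul]
  norm_num
  linarith
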